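/- Let (Y,d) be a Baire metric space and Φ = (φ_n) a sequence of continuous bounded real-valued functions on Y with limsup_n ‖φ_n‖_∞ < ∞. Then Y is Φ-chaotic if and only if Y is Φ-sensitive. -/

import Mathlib

open Filter Topology MeasureTheory Metric Set TopologicalSpace

section Defs

variable {X : Type*} [TopologicalSpace X]

/-- The `n`-th Birkhoff average of `φ` along the orbit of `x` under `T`. -/
noncomputable def birkhoffAvg (T : X → X) (φ : X → ℝ) (x : X) (n : ℕ) : ℝ :=
  (∑ j ∈ Finset.range n, φ (T^[j] x)) / n

/-- The set of `(T,φ)`-irregular points. -/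
def irregularSet (T : X → X) (φ : X → ℝ) : Set X :=
  {x | ¬ ∃ l : ℝ, Tendsto (fun n => birkhoffAvg T φ x n) atTop (𝓝 l)}

/-- The set of completely irregular points of `T`. -/
def completelyIrregular (T : X → X) : Set X :=
  {x | ∀ φ : X → ℝ, Continuous φ → (irregularSet T φ).Nonempty → x ∈ irregularSet T φ}

/-- The omega-limit set of `x` under `T`. -/
def omegaLimitSet (T : X → X) (x : X) : Set X :=
  ⋂ N : ℕ, closure ((fun n => T^[n] x) '' Set.Ici N)

/-- The closure of the forward orbit of `x` under `T`. -/
def orbitClosure (T : X → X) (x : X) : Set X :=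
  closure (Set.range fun n : ℕ => T^[n] x)

/-- Topological transitivity. -/
def TopTransitive (T : X → X) : Prop :=
  ∀ U V : Set X, IsOpen U → IsOpen V → U.Nonempty → V.Nonempty →
    ∃ n : ℕ, (U ∩ T^[n] ⁻¹' V).Nonempty

/-- The set of non-wandering points of `T`. -/
def nonWandering (T : X → X) : Set X :=
  {z | ∀ U : Set X, IsOpen U → z ∈ U → ∃ N : ℕ, 1 ≤ N ∧ (T^[N] '' U ∩ U).Nonempty}

/-- The space `X` has no isolated points. -/
def NoIsolatedPoints (X : Type*) [TopologicalSpace X] : Prop :=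
  ∀ x : X, (𝓝[≠] x).NeBot

end Defs

/-- The shadowing property. -/
def ShadowingProperty {X : Type*} [MetricSpace X] (T : X → X) : Prop :=
  ∀ ε > 0, ∃ δ > 0, ∀ u : ℕ → X, (∀ n, dist (T (u n)) (u (n + 1)) < δ) →
    ∃ y : X, ∀ n, dist (T^[n] y) (u n) < ε

section MeasureDefs

variable {X : Type*} [TopologicalSpace X] [MeasurableSpace X]

/-- `μ` is a `T`-invariant Borel probability measure. -/
def InvariantProb (T : X → X) (μ : ProbabilityMeasure X) : Prop :=
  (μ : Measure X).map T = (μ : Measure X)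

/-- The (topological) support of a probability measure. -/
def msupp (μ : ProbabilityMeasure X) : Set X :=
  {x | ∀ U : Set X, x ∈ U → IsOpen U → 0 < (μ : Measure X) U}

/-- `μ ∈ V_T(x)`: `μ` is a weak* accumulation point of the empirical measures
along the orbit of `x`, characterized through convergence of Birkhoff averages of
every continuous function along a subsequence. -/
def memVT (T : X → X) (x : X) (μ : ProbabilityMeasure X) : Prop :=
  ∃ n : ℕ → ℕ, StrictMono n ∧ ∀ φ : X → ℝ, Continuous φ →
    Tendsto (fun k => birkhoffAvg T φ x (n k)) atTop (𝓝 (∫ y, φ y ∂(μ : Measure X)))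

/-- The measure center of `T`. -/
def measureCenter (T : X → X) : Set X :=
  closure (⋃ μ ∈ {μ : ProbabilityMeasure X | InvariantProb T μ}, msupp μ)

/-- The basin of attraction of an invariant probability measure. -/
def basin (T : X → X) (η : ProbabilityMeasure X) : Set X :=
  {x | ∀ ψ : X → ℝ, Continuous ψ →
    Tendsto (fun n => birkhoffAvg T ψ x n) atTop (𝓝 (∫ y, ψ y ∂(η : Measure X)))}

end MeasureDefs


/-- The set of accumulation points of a real sequence. -/
def accPoints (u : ℕ → ℝ) : Set ℝ := {r | MapClusterPt r atTop u}

/-- `Y` is `Φ`-chaotic. -/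
def PhiChaotic {Y : Type*} [MetricSpace Y] (φ : ℕ → Y → ℝ) : Prop :=
  ∃ (Fam : Set (Set Y)) (ε : ℝ), 0 < ε ∧ ∀ U : Set Y, IsOpen U → U.Nonempty →
    ∃ a ∈ (⋃₀ Fam) ∩ U, ∃ b ∈ (⋃₀ Fam) ∩ U,
      ε < Metric.diam (accPoints (fun n => φ n a) ∪ accPoints (fun n => φ n b))

/-- `Y` is `Φ`-sensitive. -/
def PhiSensitive {Y : Type*} [MetricSpace Y] (φ : ℕ → Y → ℝ) : Prop :=
  ∃ (A B : Set Y) (ε : ℝ), 0 < ε ∧ Dense A ∧ Dense B ∧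
    ∀ a ∈ A, ∀ b ∈ B,
      ∃ r ∈ accPoints (fun n => φ n a), ∃ s ∈ accPoints (fun n => φ n b), ε < |r - s|

section MyAux
set_option linter.unusedSectionVars false

lemma my_nwd_meagre {X : Type*} [TopologicalSpace X] {s : Set X}
    (h : IsNowhereDense s) : IsMeagre s :=
  isMeagre_iff_countable_union_isNowhereDense.mpr
    ⟨{s}, by simpa using h, countable_singleton s, by simp⟩

lemma my_meagre_union {X : Type*} [TopologicalSpace X] {s t : Set X}
    (hs : IsMeagre s) (ht : IsMeagre t) : IsMeagre (s ∪ t) := by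
  rw [IsMeagre, compl_union]; exact Filter.inter_mem hs ht

/-- For a Gδ set `E`, `closure E \ E` is meagre. -/
lemma my_isMeagre_closure_diff {X : Type*} [TopologicalSpace X] {E : Set X}
    (hE : IsGδ E) : IsMeagre (closure E \ E) := by
  obtain ⟨T, hTopen, hTc, rfl⟩ := hE
  set E := ⋂₀ T with hEdef
  set O := interior (closure E) with hO
  have hsub : closure E \ E ⊆ (closure E \ O) ∪ (O \ E) := by
    intro x hx
    by_cases hxO : x ∈ O
    · exact Or.inr ⟨hxO, hx.2⟩
    · exact Or.inl ⟨hx.1, hxO⟩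
  refine IsMeagre.mono hsub (my_meagre_union ?_ ?_)
  · -- frontier part: closed with empty interior
    refine my_nwd_meagre ?_
    have hcl : IsClosed (closure E \ O) := isClosed_closure.sdiff isOpen_interior
    rw [hcl.isNowhereDense_iff]
    rw [Set.eq_empty_iff_forall_notMem]
    intro x hx
    have h1 : x ∈ interior (closure E) := by
      exact interior_mono diff_subset hx
    have h2 : x ∈ interior Oᶜ := by
      refine interior_mono (fun y hy => hy.2) hx
    exact (interior_subset h2 : x ∈ Oᶜ) h1
  · -- O \ E meagre
    rcases T.eq_empty_or_nonempty with rfl | hTne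
    · simp only [hEdef, sInter_empty, diff_univ]
      exact IsMeagre.empty
    obtain ⟨f, rfl⟩ := hTc.exists_eq_range hTne
    have hOE : O \ E = ⋃ n, (O \ f n) := by
      rw [hEdef, sInter_range]
      ext x
      simp only [mem_diff, mem_iUnion, hEdef, sInter_range, mem_iInter]
      push_neg
      constructor
      · rintro ⟨hxO, i, hi⟩; exact ⟨i, hxO, hi⟩
      · rintro ⟨i, hxO, hi⟩; exact ⟨hxO, i, hi⟩
    rw [hOE]
    refine isMeagre_iUnion fun n => my_nwd_meagre ?_
    -- O \ f n is nowhere dense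
    rw [IsNowhereDense, Set.eq_empty_iff_forall_notMem]
    intro x hx
    set V := interior (closure (O \ f n)) with hV
    have hVopen : IsOpen V := isOpen_interior
    have hVsub : V ⊆ (f n)ᶜ := by
      have : closure (O \ f n) ⊆ (f n)ᶜ := by
        refine closure_minimal (fun y hy => hy.2) ?_
        exact (hTopen (f n) (mem_range_self n)).isClosed_compl
      exact interior_subset.trans this
    have hVclO : V ⊆ closure O := by
      refine interior_subset.trans (closure_mono (fun y hy => hy.1))
    -- V ∩ O nonempty open subset of closure E, so meets E
    have hxO : (V ∩ O).Nonempty := by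
      have : x ∈ closure O := hVclO hx
      rcases mem_closure_iff.mp this V hVopen hx with ⟨y, hyV, hyO⟩
      exact ⟨y, hyV, hyO⟩
    obtain ⟨z, hzV, hzO⟩ := hxO
    have hMeet : ((V ∩ O) ∩ E).Nonempty := by
      have hzclE : z ∈ closure E := interior_subset hzO
      rcases mem_closure_iff.mp hzclE (V ∩ O) (hVopen.inter isOpen_interior) ⟨hzV, hzO⟩
        with ⟨w, hw, hwE⟩
      exact ⟨w, hw, hwE⟩
    obtain ⟨w, ⟨hwV, _⟩, hwE⟩ := hMeet
    have : w ∈ f n := hwE (f n) (mem_range_self n)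
    exact hVsub hwV this

section cluster
variable {u : ℕ → ℝ} {C : ℝ}

lemma my_bddAbove (hu : ∀ᶠ n in atTop, |u n| ≤ C) :
    IsBoundedUnder (· ≤ ·) atTop u :=
  isBoundedUnder_of_eventually_le (a := C) (by filter_upwards [hu] with n h using (abs_le.mp h).2)

lemma my_bddBelow (hu : ∀ᶠ n in atTop, |u n| ≤ C) :
    IsBoundedUnder (· ≥ ·) atTop u :=
  isBoundedUnder_of_eventually_ge (a := -C) (by filter_upwards [hu] with n h using (abs_le.mp h).1)

lemma my_limsup_acc (hu : ∀ᶠ n in atTop, |u n| ≤ C) :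
    MapClusterPt (limsup u atTop) atTop u := by
  rw [mapClusterPt_iff_frequently]
  intro s hs
  obtain ⟨η, hη, hball⟩ := Metric.mem_nhds_iff.mp hs
  have h1 : ∃ᶠ n in atTop, limsup u atTop - η < u n :=
    frequently_lt_of_lt_limsup ((my_bddBelow hu).isCoboundedUnder_flip) (by linarith)
  have h2 : ∀ᶠ n in atTop, u n < limsup u atTop + η :=
    eventually_lt_of_limsup_lt (by linarith) (my_bddAbove hu)
  refine (h1.and_eventually h2).mono fun n hn => hball ?_
  rw [Metric.mem_ball, Real.dist_eq, abs_sub_lt_iff]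
  constructor <;> linarith [hn.1, hn.2]

lemma my_liminf_acc (hu : ∀ᶠ n in atTop, |u n| ≤ C) :
    MapClusterPt (liminf u atTop) atTop u := by
  rw [mapClusterPt_iff_frequently]
  intro s hs
  obtain ⟨η, hη, hball⟩ := Metric.mem_nhds_iff.mp hs
  have h1 : ∃ᶠ n in atTop, u n < liminf u atTop + η :=
    frequently_lt_of_liminf_lt ((my_bddAbove hu).isCoboundedUnder_flip) (by linarith)
  have h2 : ∀ᶠ n in atTop, liminf u atTop - η < u n :=
    eventually_lt_of_lt_liminf (by linarith) (my_bddBelow hu)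
  refine (h1.and_eventually h2).mono fun n hn => hball ?_
  rw [Metric.mem_ball, Real.dist_eq, abs_sub_lt_iff]
  constructor <;> linarith [hn.1, hn.2]

lemma my_acc_bound (hu : ∀ᶠ n in atTop, |u n| ≤ C) {r : ℝ}
    (hr : MapClusterPt r atTop u) : |r| ≤ C := by
  by_contra h
  push_neg at h
  have hs : {x : ℝ | C < |x|} ∈ 𝓝 r := by
    have : IsOpen {x : ℝ | C < |x|} := isOpen_lt continuous_const continuous_abs
    exact this.mem_nhds h
  have := (mapClusterPt_iff_frequently.mp hr _ hs).and_eventually hu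
  obtain ⟨n, h1, h2⟩ := this.exists
  exact absurd h2 (not_le.mpr h1)

lemma my_limsup_ge (hu : ∀ᶠ n in atTop, |u n| ≤ C) {c : ℝ}
    (h : ∀ k : ℕ, ∃ᶠ n in atTop, c - 1/((k:ℝ)+1) < u n) : c ≤ limsup u atTop := by
  by_contra hlt
  push_neg at hlt
  obtain ⟨k, hk⟩ := exists_nat_one_div_lt (sub_pos.mpr hlt)
  have := le_limsup_of_frequently_le ((h k).mono fun n hn => hn.le) (my_bddAbove hu)
  linarith

lemma my_liminf_le (hu : ∀ᶠ n in atTop, |u n| ≤ C) {c : ℝ}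
    (h : ∀ k : ℕ, ∃ᶠ n in atTop, u n < c + 1/((k:ℝ)+1)) : liminf u atTop ≤ c := by
  by_contra hlt
  push_neg at hlt
  obtain ⟨k, hk⟩ := exists_nat_one_div_lt (sub_pos.mpr hlt)
  have := liminf_le_of_frequently_le ((h k).mono fun n hn => hn.le) (my_bddBelow hu)
  linarith

end cluster

section EF
variable {Y : Type*} [MetricSpace Y] (φ : ℕ → Y → ℝ)

def mySetE (c : ℝ) : Set Y :=
  ⋂ (k : ℕ), ⋂ (N : ℕ), ⋃ (n : ℕ), ⋃ (_ : N ≤ n), {y | c - 1/((k:ℝ)+1) < φ n y}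

def mySetF (c : ℝ) : Set Y :=
  ⋂ (k : ℕ), ⋂ (N : ℕ), ⋃ (n : ℕ), ⋃ (_ : N ≤ n), {y | φ n y < c + 1/((k:ℝ)+1)}

lemma my_isGδ_E (hcont : ∀ n, Continuous (φ n)) (c : ℝ) : IsGδ (mySetE φ c) := by
  refine IsGδ.iInter fun k => IsGδ.iInter fun N => IsOpen.isGδ ?_
  exact isOpen_iUnion fun n => isOpen_iUnion fun _ => isOpen_lt continuous_const (hcont n)

lemma my_isGδ_F (hcont : ∀ n, Continuous (φ n)) (c : ℝ) : IsGδ (mySetF φ c) := by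
  refine IsGδ.iInter fun k => IsGδ.iInter fun N => IsOpen.isGδ ?_
  exact isOpen_iUnion fun n => isOpen_iUnion fun _ => isOpen_lt (hcont n) continuous_const

lemma my_mem_E_iff {c : ℝ} {y : Y} :
    y ∈ mySetE φ c ↔ ∀ k : ℕ, ∃ᶠ n in atTop, c - 1/((k:ℝ)+1) < φ n y := by
  simp only [mySetE, mem_iInter, mem_iUnion, mem_setOf_eq, frequently_atTop, ge_iff_le,
    exists_prop]

lemma my_mem_F_iff {c : ℝ} {y : Y} :
    y ∈ mySetF φ c ↔ ∀ k : ℕ, ∃ᶠ n in atTop, φ n y < c + 1/((k:ℝ)+1) := by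
  simp only [mySetF, mem_iInter, mem_iUnion, mem_setOf_eq, frequently_atTop, ge_iff_le,
    exists_prop]

lemma my_mem_E_of_acc {c r : ℝ} {y : Y}
    (hr : MapClusterPt r atTop (fun n => φ n y)) (hcr : c ≤ r) : y ∈ mySetE φ c := by
  rw [my_mem_E_iff]
  intro k
  have h1 : (0:ℝ) < 1/((k:ℝ)+1) := by positivity
  have hmem : Ioi (c - 1/((k:ℝ)+1)) ∈ 𝓝 r := Ioi_mem_nhds (by linarith)
  exact (mapClusterPt_iff_frequently.mp hr _ hmem).mono fun n hn => hn

lemma my_mem_F_of_acc {c s : ℝ} {y : Y}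
    (hs : MapClusterPt s atTop (fun n => φ n y)) (hcs : s ≤ c) : y ∈ mySetF φ c := by
  rw [my_mem_F_iff]
  intro k
  have h1 : (0:ℝ) < 1/((k:ℝ)+1) := by positivity
  have hmem : Iio (c + 1/((k:ℝ)+1)) ∈ 𝓝 s := Iio_mem_nhds (by linarith)
  exact (mapClusterPt_iff_frequently.mp hs _ hmem).mono fun n hn => hn

end EF
end MyAux

theorem stmt14 {Y : Type*} [MetricSpace Y] [BaireSpace Y] (φ : ℕ → Y → ℝ)
    (hcont : ∀ n, Continuous (φ n)) (hbd : ∀ n, ∃ C : ℝ, ∀ y, |φ n y| ≤ C)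
    (hlimsup : ∃ C : ℝ, ∀ᶠ n in atTop, ∀ y, |φ n y| ≤ C) :
    PhiChaotic φ ↔ PhiSensitive φ := by
  classical
  obtain ⟨C₀, hC₀⟩ := hlimsup
  set C : ℝ := max C₀ 0 with hCdef
  have hC0 : 0 ≤ C := le_max_right _ _
  have hCy : ∀ y, ∀ᶠ n in atTop, |φ n y| ≤ C :=
    fun y => hC₀.mono fun n h => (h y).trans (le_max_left _ _)
  constructor
  · -- chaotic → sensitive
    rintro ⟨Fam, ε, hε, hFam⟩
    set δ : ℝ := ε/8 with hδdef
    have hδpos : 0 < δ := by positivity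
    set M : ℕ := ⌈C/δ⌉₊ with hMdef
    set I : Finset ℤ := Finset.Icc (-(M:ℤ)) (M:ℤ) with hIdef
    have hCM : C/δ ≤ (M:ℝ) := Nat.le_ceil _
    -- the key localization
    have key : ∀ V : Set Y, IsOpen V → V.Nonempty →
        ∃ i ∈ I, ∃ j ∈ I, ε/2 < ((i:ℝ) - (j:ℝ)) * δ ∧
          (mySetE φ ((i:ℝ)*δ) ∩ V).Nonempty ∧ (mySetF φ ((j:ℝ)*δ) ∩ V).Nonempty := by
      intro V hVopen hVne
      obtain ⟨a, ⟨haF, haV⟩, b, ⟨hbF, hbV⟩, hdiam⟩ := hFam V hVopen hVne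
      set S := accPoints (fun n => φ n a) ∪ accPoints (fun n => φ n b) with hSdef
      have hpair : ∃ r ∈ S, ∃ s ∈ S, ε < dist r s := by
        by_contra h
        push_neg at h
        exact absurd hdiam (not_lt.mpr (diam_le_of_forall_dist_le hε.le h))
      obtain ⟨r₀, hr₀, s₀, hs₀, hrs₀⟩ := hpair
      set r := max r₀ s₀ with hrdef
      set s := min r₀ s₀ with hsdef
      have hrS : r ∈ S := by rcases le_total r₀ s₀ with h | h <;> simp [hrdef, h, hr₀, hs₀]
      have hsS : s ∈ S := by rcases le_total r₀ s₀ with h | h <;> simp [hsdef, h, hr₀, hs₀]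
      have hgap : ε < r - s := by
        rw [hrdef, hsdef, max_sub_min_eq_abs]
        rw [Real.dist_eq] at hrs₀
        first
        | exact hrs₀
        | · rw [abs_sub_comm]; exact hrs₀
      have hboundS : ∀ x ∈ S, |x| ≤ C := by
        rintro x (hx | hx)
        · exact my_acc_bound (hCy a) hx
        · exact my_acc_bound (hCy b) hx
      have hrC : |r| ≤ C := hboundS r hrS
      have hsC : |s| ≤ C := hboundS s hsS
      have hCMδ : C ≤ (M:ℝ) * δ := (div_le_iff₀ hδpos).mp hCM
      set i : ℤ := ⌊r/δ⌋ with hidef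
      set j : ℤ := ⌈s/δ⌉ with hjdef
      have hile : (i:ℝ) * δ ≤ r := by
        have h1 := Int.floor_le (r/δ)
        calc (i:ℝ) * δ ≤ (r/δ) * δ := mul_le_mul_of_nonneg_right h1 hδpos.le
          _ = r := div_mul_cancel₀ r hδpos.ne'
      have higt : r - δ < (i:ℝ) * δ := by
        have h1 := Int.sub_one_lt_floor (r/δ)
        have h2 : (r/δ - 1) * δ < (i:ℝ) * δ := mul_lt_mul_of_pos_right h1 hδpos
        calc r - δ = (r/δ - 1) * δ := by field_simp
          _ < (i:ℝ) * δ := h2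
      have hjge : s ≤ (j:ℝ) * δ := by
        have h1 := Int.le_ceil (s/δ)
        calc s = (s/δ) * δ := (div_mul_cancel₀ s hδpos.ne').symm
          _ ≤ (j:ℝ) * δ := mul_le_mul_of_nonneg_right h1 hδpos.le
      have hjlt : (j:ℝ) * δ < s + δ := by
        have h1 := Int.ceil_lt_add_one (s/δ)
        have h2 : (j:ℝ) * δ < (s/δ + 1) * δ := mul_lt_mul_of_pos_right h1 hδpos
        calc (j:ℝ) * δ < (s/δ + 1) * δ := h2
          _ = s + δ := by field_simp
      have hiI : i ∈ I := by
        rw [hIdef, Finset.mem_Icc]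
        constructor
        · rw [hidef, Int.le_floor]
          push_cast
          rw [le_div_iff₀ hδpos]
          have := (abs_le.mp hrC).1
          linarith
        · have h1 : (i:ℝ) ≤ (M:ℝ) := by
            have h2 := Int.floor_le (r/δ)
            have h3 : r/δ ≤ C/δ := by
              apply div_le_div_of_nonneg_right ((abs_le.mp hrC).2) hδpos.le
            linarith
          exact_mod_cast h1
      have hjI : j ∈ I := by
        rw [hIdef, Finset.mem_Icc]
        constructor
        · have h1 : (-(M:ℤ) : ℝ) ≤ (j:ℝ) := by
            have h2 := Int.le_ceil (s/δ)
            have h3 : -(C/δ) ≤ s/δ := by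
              rw [neg_le, ← neg_div]
              apply div_le_div_of_nonneg_right ?_ hδpos.le
              linarith [(abs_le.mp hsC).1]
            push_cast
            linarith [hCM]
          exact_mod_cast h1
        · rw [hjdef, Int.ceil_le]
          push_cast
          have h3 : s/δ ≤ C/δ := div_le_div_of_nonneg_right ((abs_le.mp hsC).2) hδpos.le
          linarith
      refine ⟨i, hiI, j, hjI, ?_, ?_, ?_⟩
      · have hsm : ((i:ℝ) - (j:ℝ)) * δ = (i:ℝ)*δ - (j:ℝ)*δ := sub_mul _ _ _
        rw [hsm]
        have : δ = ε/8 := hδdef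
        linarith
      · -- owner of r is in mySetE φ (i*δ) ∩ V
        rcases hrS with hx | hx
        · exact ⟨a, my_mem_E_of_acc φ hx hile, haV⟩
        · exact ⟨b, my_mem_E_of_acc φ hx hile, hbV⟩
      · rcases hsS with hx | hx
        · exact ⟨a, my_mem_F_of_acc φ hx hjge, haV⟩
        · exact ⟨b, my_mem_F_of_acc φ hx hjge, hbV⟩
    -- now the residual set R
    set EE : ℤ → Set Y := fun i => mySetE φ ((i:ℝ)*δ) with hEEdef
    set FF : ℤ → Set Y := fun j => mySetF φ ((j:ℝ)*δ) with hFFdef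
    set R : Set Y := ⋂ i ∈ I, ((closure (EE i) \ EE i)ᶜ ∩ (closure (FF i) \ FF i)ᶜ) with hRdef
    have hRres : R ∈ residual Y := by
      rw [hRdef]
      refine (Filter.biInter_finset_mem I).mpr fun i _ => Filter.inter_mem ?_ ?_
      · exact my_isMeagre_closure_diff (my_isGδ_E φ hcont _)
      · exact my_isMeagre_closure_diff (my_isGδ_F φ hcont _)
    have hRdense : Dense R := dense_of_mem_residual hRres
    have main : ∀ y ∈ R, ∃ t ∈ accPoints (fun n => φ n y),
        ∃ t' ∈ accPoints (fun n => φ n y), ε/2 < t - t' := by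
      intro y hy
      have hyR : ∀ i ∈ I, (y ∈ closure (EE i) → y ∈ EE i) ∧
          (y ∈ closure (FF i) → y ∈ FF i) := by
        intro i hi
        rw [hRdef] at hy
        have h1 := mem_iInter₂.mp hy i hi
        rcases h1 with ⟨h1, h2⟩
        rw [mem_compl_iff, mem_diff, not_and, not_not] at h1 h2
        exact ⟨h1, h2⟩
      set UE : ℤ → Set Y := fun i =>
        if y ∈ closure (EE i) then univ else (closure (EE i))ᶜ with hUEdef
      set UF : ℤ → Set Y := fun i =>
        if y ∈ closure (FF i) then univ else (closure (FF i))ᶜ with hUFdef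
      set U : Set Y := (⋂ i ∈ I, UE i) ∩ (⋂ i ∈ I, UF i) with hUdef
      have hUopen : IsOpen U := by
        refine IsOpen.inter (isOpen_biInter_finset fun i _ => ?_)
          (isOpen_biInter_finset fun i _ => ?_) <;>
          · simp only [hUEdef, hUFdef]
            split_ifs
            exacts [isOpen_univ, isClosed_closure.isOpen_compl]
      have hyU : y ∈ U := by
        constructor <;> refine mem_iInter₂.mpr fun i hi => ?_ <;>
          · simp only [hUEdef, hUFdef]
            split_ifs with h
            exacts [mem_univ y, h]
      obtain ⟨i, hiI, j, hjI, hgapij, ⟨a, haE, haU⟩, ⟨b, hbF, hbU⟩⟩ := key U hUopen ⟨y, hyU⟩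
      have hyEi : y ∈ EE i := by
        have haUE : a ∈ UE i := mem_iInter₂.mp haU.1 i hiI
        by_cases hc : y ∈ closure (EE i)
        · exact (hyR i hiI).1 hc
        · exfalso
          rw [hUEdef] at haUE
          simp only [hc, if_false, mem_compl_iff] at haUE
          exact haUE (subset_closure haE)
      have hyFj : y ∈ FF j := by
        have hbUF : b ∈ UF j := mem_iInter₂.mp hbU.2 j hjI
        by_cases hc : y ∈ closure (FF j)
        · exact (hyR j hjI).2 hc
        · exfalso
          rw [hUFdef] at hbUF
          simp only [hc, if_false, mem_compl_iff] at hbUF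
          exact hbUF (subset_closure hbF)
      refine ⟨limsup (fun n => φ n y) atTop, my_limsup_acc (hCy y),
        liminf (fun n => φ n y) atTop, my_liminf_acc (hCy y), ?_⟩
      have h1 : (i:ℝ)*δ ≤ limsup (fun n => φ n y) atTop :=
        my_limsup_ge (hCy y) ((my_mem_E_iff φ).mp hyEi)
      have h2 : liminf (fun n => φ n y) atTop ≤ (j:ℝ)*δ :=
        my_liminf_le (hCy y) ((my_mem_F_iff φ).mp hyFj)
      have hsm : ((i:ℝ) - (j:ℝ)) * δ = (i:ℝ)*δ - (j:ℝ)*δ := sub_mul _ _ _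
      linarith [hgapij, hsm.symm.le]
    refine ⟨R, R, ε/4, by linarith, hRdense, hRdense, ?_⟩
    intro a ha b hb
    obtain ⟨ta, hta, ta', hta', hga⟩ := main a ha
    obtain ⟨tb, htb, tb', htb', hgb⟩ := main b hb
    by_cases hcase : ε/4 < ta - tb'
    · exact ⟨ta, hta, tb', htb', lt_of_lt_of_le hcase (le_abs_self _)⟩
    · refine ⟨ta', hta', tb, htb, ?_⟩
      have h1 : ε/4 < tb - ta' := by linarith
      calc ε/4 < tb - ta' := h1
        _ = -(ta' - tb) := by ring
        _ ≤ |ta' - tb| := neg_le_abs _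
  · -- sensitive → chaotic
    rintro ⟨A, B, ε, hε, hA, hB, hAB⟩
    refine ⟨{A, B}, ε, hε, ?_⟩
    intro U hU hUne
    obtain ⟨a, haU, haA⟩ := hA.inter_open_nonempty U hU hUne
    obtain ⟨b, hbU, hbB⟩ := hB.inter_open_nonempty U hU hUne
    obtain ⟨r, hr, s, hs, hrs⟩ := hAB a haA b hbB
    refine ⟨a, ⟨⟨A, by simp, haA⟩, haU⟩, b, ⟨⟨B, by simp, hbB⟩, hbU⟩, ?_⟩
    have hbdd : Bornology.IsBounded
        (accPoints (fun n => φ n a) ∪ accPoints (fun n => φ n b)) := by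
      refine (Metric.isBounded_Icc (-C) C).subset ?_
      rintro x (hx | hx)
      · exact abs_le.mp (my_acc_bound (hCy a) hx)
      · exact abs_le.mp (my_acc_bound (hCy b) hx)
    have hd := dist_le_diam_of_mem hbdd (Or.inl hr) (Or.inr hs)
    rw [Real.dist_eq] at hd
    linarith
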